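/- Let Λ be a local Artinian ring with maximal ideal m and residue field k, and M a finitely generated Λ-module with no nonzero projective direct summands. Then the natural map ζ(k) : Tr M ⊗_Λ k → Hom_Λ((Tr M)*, k), given by ζ(k)(a ⊗ r̄)(f) = f(a)·r̄, is the zero map. -/

import Mathlib

open CategoryTheory TensorProduct

universe u

variable (Λ : Type u) [CommRing Λ]

/-- The natural map `ζ : M ⊗ N → Hom(M*, N)`, `ζ(m ⊗ n)(g) = g(m) • n`. -/
noncomputable def zetaMap (M N : Type u) [AddCommGroup M] [Module Λ M]
    [AddCommGroup N] [Module Λ N] :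
    (M ⊗[Λ] N) →ₗ[Λ] (Module.Dual Λ M →ₗ[Λ] N) :=
  TensorProduct.lift (LinearMap.mk₂ Λ
    (fun m n => (Module.Dual.eval Λ M m).smulRight n)
    (fun m m' n => by ext g; simp [add_smul])
    (fun c m n => by ext g; simp [mul_smul])
    (fun m n n' => by ext g; simp [smul_add])
    (fun c m n => by
      ext g
      simp only [LinearMap.smulRight_apply, LinearMap.smul_apply]
      exact smul_comm _ c n))

/-- The transpose of `M` with respect to the finite free presentation `f`. -/
abbrev TransposeOf (p q : ℕ) (f : (Fin p → Λ) →ₗ[Λ] (Fin q → Λ)) : Type u :=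
  (Module.Dual Λ (Fin p → Λ)) ⧸ LinearMap.range f.dualMap

/-- `M` has no nonzero projective direct summands. -/
def NoProjectiveSummands (M : Type u) [AddCommGroup M] [Module Λ M] : Prop :=
  ∀ A B : Submodule Λ M, IsCompl A B → Module.Projective Λ A → A = ⊥

theorem stmt13 [IsArtinianRing Λ] [IsLocalRing Λ]
    (M : Type u) [AddCommGroup M] [Module Λ M] [Module.Finite Λ M]
    (hM : NoProjectiveSummands Λ M)
    (p q : ℕ) (f : (Fin p → Λ) →ₗ[Λ] (Fin q → Λ)) (g : (Fin q → Λ) →ₗ[Λ] M)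
    (hg : Function.Surjective g) (hexact : LinearMap.range f = LinearMap.ker g)
    (hmin₀ : LinearMap.ker g ≤
      (IsLocalRing.maximalIdeal Λ) • (⊤ : Submodule Λ (Fin q → Λ)))
    (hmin₁ : LinearMap.ker f ≤
      (IsLocalRing.maximalIdeal Λ) • (⊤ : Submodule Λ (Fin p → Λ))) :
    zetaMap Λ (TransposeOf Λ p q f) (IsLocalRing.ResidueField Λ) = 0 := by
  -- Key claim: every functional on the transpose takes values in the maximal ideal.
  have key : ∀ (φ : Module.Dual Λ (TransposeOf Λ p q f)) (a : TransposeOf Λ p q f),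
      φ a ∈ IsLocalRing.maximalIdeal Λ := by
    intro φ a
    set π := Submodule.mkQ (LinearMap.range f.dualMap)
    set ψ : Module.Dual Λ (Module.Dual Λ (Fin p → Λ)) := φ.comp π with hψ
    set bp := Pi.basisFun Λ (Fin p)
    set bq := Pi.basisFun Λ (Fin q)
    set x : Fin p → Λ := fun i => ψ (bp.coord i) with hx
    -- ψ is evaluation at x
    have heval : ∀ h : Module.Dual Λ (Fin p → Λ), ψ h = h x := by
      have : ψ = Module.Dual.eval Λ (Fin p → Λ) x := by
        apply bp.dualBasis.ext
        intro i
        have : bp.dualBasis i = bp.coord i := by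
          rw [Module.Basis.coe_dualBasis]
        rw [this]
        simp [bp, Module.Basis.coord_apply, Pi.basisFun_repr, hx]
      intro h
      rw [this]
      rfl
    -- f x = 0
    have hfx : f x = 0 := by
      funext j
      have h1 : (f x) j = bq.coord j (f x) := by
        simp [bq, Module.Basis.coord_apply, Pi.basisFun_repr]
      have h2 : bq.coord j (f x) = (f.dualMap (bq.coord j)) x := rfl
      have h3 : ψ (f.dualMap (bq.coord j)) = 0 := by
        have hπ : π (f.dualMap (bq.coord j)) = 0 := by
          rw [Submodule.mkQ_apply, Submodule.Quotient.mk_eq_zero]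
          exact ⟨bq.coord j, rfl⟩
        show φ (π (f.dualMap (bq.coord j))) = 0
        rw [hπ, map_zero]
      show (f x) j = (0 : Fin q → Λ) j
      rw [h1, h2, ← heval, h3]
      rfl
    -- so x ∈ m • ⊤
    have hxm : x ∈ (IsLocalRing.maximalIdeal Λ) • (⊤ : Submodule Λ (Fin p → Λ)) :=
      hmin₁ (by simpa [LinearMap.mem_ker] using hfx)
    -- every functional sends m • ⊤ into m
    have hval : ∀ h : Module.Dual Λ (Fin p → Λ), h x ∈ IsLocalRing.maximalIdeal Λ := by
      intro h
      refine Submodule.smul_induction_on hxm ?_ ?_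
      · intro r hr y _
        rw [map_smul]
        exact Ideal.mul_mem_right _ _ hr
      · intro y z hy hz
        rw [map_add]; exact add_mem hy hz
    -- conclude for a
    obtain ⟨h, rfl⟩ := Submodule.mkQ_surjective _ a
    have : φ (π h) = ψ h := rfl
    rw [this, heval]
    exact hval h
  -- now kill the map
  apply TensorProduct.ext'
  intro a n
  ext φ
  have h0 : φ a • n = (0 : IsLocalRing.ResidueField Λ) := by
    rw [Algebra.smul_def]
    have : algebraMap Λ (IsLocalRing.ResidueField Λ) (φ a) = 0 :=
      Ideal.Quotient.eq_zero_iff_mem.mpr (key φ a)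
    rw [this, zero_mul]
  simp [zetaMap, h0]
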